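/- Let σ : [0,∞) → ℝ be convex with σ(0) = 0, and suppose m_σ ≥ 0 is a constant such that (x+y)(σ(x+y) − σ(x) − σ(y)) ≤ m_σ (x σ(y) + y σ(x)) for all real x ≥ 0 and y ≥ 1. Then for all positive integers i, j, k with k ≤ i, (j+k)(σ(i−k) + σ(j+k) − σ(i) − σ(j)) ≤ m_σ (j σ(k) + k σ(j)). -/

import Mathlib

lemma sigma_super (σ : ℝ → ℝ) (hconv : ConvexOn ℝ (Set.Ici 0) σ) (h0 : σ 0 = 0)
    (a b : ℝ) (ha : 0 ≤ a) (hb : 0 ≤ b) (hab : 0 < a + b) :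
    σ a + σ b ≤ σ (a + b) := by
  have key : ∀ t : ℝ, 0 ≤ t → t ≤ a + b → σ t ≤ t / (a + b) * σ (a + b) := by
    intro t ht htab
    have h := hconv.2 (x := a + b) (y := 0) (Set.mem_Ici.2 (le_of_lt hab))
      (Set.mem_Ici.2 (le_refl (0:ℝ)))
      (show (0:ℝ) ≤ t / (a+b) by positivity)
      (show (0:ℝ) ≤ 1 - t/(a+b) by
        have : t / (a+b) ≤ 1 := (div_le_one hab).2 htab
        linarith)
      (by ring)
    simp only [smul_eq_mul, mul_zero, add_zero, h0] at h
    have : t / (a+b) * (a+b) = t := div_mul_cancel₀ t hab.ne'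
    rw [this] at h
    linarith
  have h1 := key a ha (by linarith)
  have h2 := key b hb (by linarith)
  have : a / (a+b) * σ (a+b) + b / (a+b) * σ (a+b) = σ (a+b) := by
    field_simp
  linarith

/-- Lemma 3.1: a convexity inequality for functions `σ` on `[0,∞)` with `σ(0) = 0`
satisfying `(x+y)(σ(x+y) − σ(x) − σ(y)) ≤ m (x σ(y) + y σ(x))`. -/
theorem sigma_exchange_inequality
    (σ : ℝ → ℝ) (hconv : ConvexOn ℝ (Set.Ici 0) σ) (h0 : σ 0 = 0)
    (m : ℝ) (hm : 0 ≤ m)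
    (hineq : ∀ x y : ℝ, 0 ≤ x → 1 ≤ y →
      (x + y) * (σ (x + y) - σ x - σ y) ≤ m * (x * σ y + y * σ x)) :
    ∀ i j k : ℕ, 1 ≤ i → 1 ≤ j → 1 ≤ k → k ≤ i →
      ((j : ℝ) + k) * (σ ((i : ℝ) - k) + σ ((j : ℝ) + k) - σ i - σ j)
        ≤ m * ((j : ℝ) * σ k + (k : ℝ) * σ j) := by
  intro i j k hi hj hk hki
  have hkR : (1:ℝ) ≤ (k:ℝ) := by exact_mod_cast hk
  have hjR : (1:ℝ) ≤ (j:ℝ) := by exact_mod_cast hj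
  have hkiR : (k:ℝ) ≤ (i:ℝ) := by exact_mod_cast hki
  have hsup : σ ((i:ℝ) - k) + σ k ≤ σ i := by
    have := sigma_super σ hconv h0 ((i:ℝ) - k) k (by linarith) (by linarith) (by linarith)
    simpa using this
  have hjk : (0:ℝ) < (j:ℝ) + k := by linarith
  have h2 := hineq (k:ℝ) (j:ℝ) (by linarith) hjR
  rw [show ((k:ℝ)+j) = (j:ℝ)+k by ring] at h2
  nlinarith [hineq]
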